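/- (1) Let X_α, α ∈ J, be pairwise disjoint sets with union X = ⋃_{α∈J} X_α, and let γ_α : P(X_α) → P(X_α) be monotone maps. Define γ : P(X) → P(X) by γ(A) := ⋃_{α∈J} γ_α(A ∩ X_α). Then γ is monotone and μ(γ) = {A ⊆ X | A ∩ X_α ∈ μ(γ_α) for all α ∈ J}; in other words, (X, μ(γ)) is the sum of the GTS's (X_α, μ(γ_α)). (2) Let X be a set, γ : P(X) → P(X) a monotone map, X₀ ⊆ X, and define δ : P(X₀) → P(X₀) by δ(A₀) := γ(A₀) ∩ X₀. Then μ(δ) ⊆ μ(γ)|X₀, where μ(γ)|X₀ = {M ∩ X₀ | M ∈ μ(γ)}; moreover the converse inclusion fails in general, even when γ is completely additive and takes only the values ∅ and X. -/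

import Mathlib

universe u v w

/-- For a monotone `γ : P(X) → P(X)`, the generalized topology `μ(γ)` of
`γ`-open sets, i.e. the sets `A` with `A ⊆ γ(A)`. -/
def muGamma {X : Type*} (γ : Set X → Set X) : Set (Set X) :=
  {A : Set X | A ⊆ γ A}

lemma mk_preimage_iUnion_image {J : Type v} {Xa : J → Type w}
    (S : ∀ α, Set (Xa α)) (α : J) :
    Sigma.mk α ⁻¹' (⋃ β, Sigma.mk β '' S β) = S α := by
  ext a
  simp only [Set.mem_preimage, Set.mem_iUnion, Set.mem_image]
  constructor
  · rintro ⟨β, b, hb, h⟩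
    obtain ⟨rfl, h2⟩ := Sigma.mk.inj_iff.mp h
    rw [heq_eq_eq] at h2
    exact h2 ▸ hb
  · exact fun h => ⟨α, a, h, rfl⟩

theorem stmt19 :
    -- (1) sums: on the disjoint union `Σ α, Xa α`, the map
    -- `γ(A) = ⋃ α γ_α (A ∩ X_α)` is monotone and `μ(γ)` is the sum of the
    -- GTS's `(X_α, μ(γ_α))`.
    (∀ (J : Type v) (Xa : J → Type w) (γa : ∀ α, Set (Xa α) → Set (Xa α)),
      (∀ α, Monotone (γa α)) →
      ∀ γ : Set (Σ α, Xa α) → Set (Σ α, Xa α),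
        (∀ A, γ A = ⋃ α, Sigma.mk α '' γa α (Sigma.mk α ⁻¹' A)) →
        (Monotone γ ∧
          muGamma γ = {A : Set (Σ α, Xa α) | ∀ α, Sigma.mk α ⁻¹' A ∈ muGamma (γa α)})) ∧
    -- (2) subspaces: `μ(δ) ⊆ μ(γ)|X₀` for `δ(A₀) = γ(A₀) ∩ X₀` ...
    (∀ (X : Type u) (γ : Set X → Set X), Monotone γ → ∀ X₀ : Set X,
      ∀ δ : Set ↥X₀ → Set ↥X₀,
        (∀ A₀ : Set ↥X₀, δ A₀ = ((↑) : ↥X₀ → X) ⁻¹' γ (((↑) : ↥X₀ → X) '' A₀)) →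
        muGamma δ ⊆ {A : Set ↥X₀ | ∃ M ∈ muGamma γ, A = ((↑) : ↥X₀ → X) ⁻¹' M}) ∧
    -- ... but the converse inclusion fails in general, even for a completely
    -- additive `γ` taking only the values `∅` and `X`.
    (∃ (X : Type) (γ : Set X → Set X) (X₀ : Set X),
      Monotone γ ∧
      (∀ S : Set (Set X), γ (⋃₀ S) = ⋃ A ∈ S, γ A) ∧
      (∀ A : Set X, γ A = ∅ ∨ γ A = Set.univ) ∧
      ¬ ({A : Set ↥X₀ | ∃ M ∈ muGamma γ, A = ((↑) : ↥X₀ → X) ⁻¹' M} ⊆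
          muGamma (fun A₀ : Set ↥X₀ =>
            ((↑) : ↥X₀ → X) ⁻¹' γ (((↑) : ↥X₀ → X) '' A₀)))) := by
  refine ⟨?part1, ?part2, ?part3⟩
  · intro J Xa γa hmono γ hγ
    constructor
    · intro A B hAB
      rw [hγ A, hγ B]
      exact Set.iUnion_mono fun α =>
        Set.image_mono (hmono α (Set.preimage_mono hAB))
    · ext A
      simp only [muGamma, Set.mem_setOf_eq]
      constructor
      · intro h α
        have := Set.preimage_mono (f := Sigma.mk α) h
        rwa [hγ A, mk_preimage_iUnion_image (fun β => γa β (Sigma.mk β ⁻¹' A)) α] at this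
      · rintro h ⟨α, a⟩ ha
        rw [hγ A]
        exact Set.mem_iUnion.mpr ⟨α, ⟨a, h α ha, rfl⟩⟩
  · intro X γ hmono X₀ δ hδ A hA
    refine ⟨((↑) : ↥X₀ → X) '' A ∪ (γ (((↑) : ↥X₀ → X) '' A) \ X₀), ?_, ?_⟩
    · intro x hx
      have hsub : γ (((↑) : ↥X₀ → X) '' A) ⊆
          γ (((↑) : ↥X₀ → X) '' A ∪ (γ (((↑) : ↥X₀ → X) '' A) \ X₀)) :=
        hmono Set.subset_union_left
      rw [Set.mem_union] at hx
      rcases hx with hx | hx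
      · obtain ⟨a, haA, rfl⟩ := hx
        have h3 := hA haA
        rw [hδ A] at h3
        exact hsub h3
      · exact hsub hx.1
    · apply Set.eq_of_subset_of_subset
      · intro a ha
        exact Set.mem_preimage.mpr (Set.mem_union_left _ ⟨a, ha, rfl⟩)
      · intro a ha
        rw [Set.mem_preimage, Set.mem_union] at ha
        rcases ha with ha | ha
        · obtain ⟨b, hb, hb2⟩ := ha
          rwa [Subtype.coe_injective hb2] at hb
        · exact absurd a.2 ha.2
  · refine ⟨Bool, fun A => {x | true ∈ A}, {x | x = false}, ?_, ?_, ?_, ?_⟩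
    · intro A B hAB x hx
      exact hAB hx
    · intro S
      ext x
      simp only [Set.mem_setOf_eq, Set.mem_sUnion, Set.mem_iUnion]
      tauto
    · intro A
      by_cases h : true ∈ A
      · right; ext x; simp [h]
      · left; ext x; simp [h]
    · intro hsub
      have hU : (Set.univ : Set ↥({x | x = false} : Set Bool)) ∈
          {A : Set ↥({x | x = false} : Set Bool) | ∃ M ∈ muGamma
            (fun A : Set Bool => {x | true ∈ A}),
            A = ((↑) : _ → Bool) ⁻¹' M} := by
        refine ⟨Set.univ, ?_, Set.preimage_univ.symm⟩
        intro x _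
        exact Set.mem_univ true
      have h1 := hsub hU
      have hfalse : (⟨false, rfl⟩ : ↥({x | x = false} : Set Bool)) ∈ (Set.univ :
          Set ↥({x | x = false} : Set Bool)) := trivial
      have h2 := h1 hfalse
      obtain ⟨⟨b, hb⟩, -, h⟩ := h2
      simp only [Set.mem_setOf_eq] at hb
      subst hb
      exact Bool.false_ne_true h
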